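/- arXiv:cs/0003035 — 3 statements merged into one kernel-verified Lean document; each statement's English description precedes it below -/
import Mathlib

section
/- For the self-referential preference default theory with ι = Fin 2, form 0 = (1 < 0) (i.e. the atomic sentence R(c_1, c_0)) and form 1 = (0 < 1) (i.e. R(c_0, c_1)), the set of accepted conclusions equals the deductive closure of the disjunction: lfp(C) = {φ : L.Sentence | every model of {(1 < 0) ∨ (0 < 1)} ∪ SPO satisfies φ}. -/
open FirstOrder Language

namespace Brevis

/-- The base language with a single binary relation symbol `R`. -/
def baseLang : Language where
  Functions := fun _ => Empty
  Relations := fun n => match n with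
    | 2 => Unit
    | _ => Empty

/-- The binary relation symbol `R` of `baseLang`. -/
def Rsym : baseLang.Relations 2 := Unit.unit

/-- The base language with a binary relation symbol `R` and one 0-ary relation symbol `P`. -/
def baseLangP : Language where
  Functions := fun _ => Empty
  Relations := fun n => match n with
    | 0 => Unit
    | 2 => Unit
    | _ => Empty

/-- The binary relation symbol `R` of `baseLangP`. -/
def RsymP : baseLangP.Relations 2 := Unit.unit

/-- The 0-ary relation symbol `P` of `baseLangP`. -/
def Psym : baseLangP.Relations 0 := Unit.unit

/-- The atomic sentence `p` given by the propositional symbol `P`. -/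
def pSent (ι : Type) : (baseLangP[[ι]]).Sentence :=
  Relations.formula (Sum.inl Psym) ![]

variable (L₀ : FirstOrder.Language.{0, 0}) (R : L₀.Relations 2) (ι : Type) [Fintype ι]

/-- The atomic sentence `d < d'`, i.e. `R (c_d) (c_d')`. -/
def ltSent (d d' : ι) : (L₀[[ι]]).Sentence :=
  Relations.boundedFormula₂ (Sum.inl R) (L₀.con d).term (L₀.con d').term

/-- The theory `SPO` asserting that `R` is a strict partial order (irreflexive and transitive). -/
def spo : (L₀[[ι]]).Theory :=
  {Relations.irreflexive (Sum.inl R), Relations.transitive (Sum.inl R)}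

/-- A set of sentences is consistent iff together with `SPO` it is satisfiable. -/
def Consistent (S : (L₀[[ι]]).Theory) : Prop :=
  Theory.IsSatisfiable (S ∪ spo L₀ R ι)

open scoped Classical in
/-- The extension base `B(e)` determined by the linear order `e` on the names. -/
noncomputable def base (e : LinearOrder ι) (form : ι → (L₀[[ι]]).Sentence) :
    (L₀[[ι]]).Theory :=
  letI := e
  (Finset.univ.sort (· ≤ · : ι → ι → Prop)).foldl
    (fun B d => if Consistent L₀ R ι (B ∪ {form d}) then B ∪ {form d} else B) ∅

/-- The deductive closure (modulo `SPO`) of a set of sentences: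
all sentences satisfied in every model of `S ∪ SPO`. -/
def closure (S : (L₀[[ι]]).Theory) : Set (L₀[[ι]]).Sentence :=
  {φ | (S ∪ spo L₀ R ι) ⊨ᵇ φ}

/-- The extension `E(e)` generated by the linear order `e`. -/
noncomputable def extension (e : LinearOrder ι) (form : ι → (L₀[[ι]]).Sentence) :
    Set (L₀[[ι]]).Sentence :=
  closure L₀ R ι (base L₀ R ι e form)

/-- A strict partial order `p` on the names is compatible with `S` iff
`S ∪ SPO ∪ {d < d' | p d d'} ∪ {¬ (d < d') | ¬ p d d'}` is satisfiable. -/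
def Compatible (p : ι → ι → Prop) (S : (L₀[[ι]]).Theory) : Prop :=
  Theory.IsSatisfiable
    (S ∪ spo L₀ R ι ∪ {φ | ∃ d d', p d d' ∧ φ = ltSent L₀ R ι d d'} ∪
      {φ | ∃ d d', ¬ p d d' ∧ φ = ∼(ltSent L₀ R ι d d')})

/-- `Exts form S`: the set of extensions `E(e)` where `e` is a linear order extending some
strict partial order compatible with `S`. -/
def Exts (form : ι → (L₀[[ι]]).Sentence) (S : (L₀[[ι]]).Theory) :
    Set (Set (L₀[[ι]]).Sentence) :=
  {E | ∃ (e : LinearOrder ι) (p : ι → ι → Prop), IsStrictOrder ι p ∧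
    Compatible L₀ R ι p S ∧ (∀ d d', p d d' → e.lt d d') ∧ E = extension L₀ R ι e form}

/-- The operator `C`. -/
def C (form : ι → (L₀[[ι]]).Sentence) (S : (L₀[[ι]]).Theory) : (L₀[[ι]]).Theory :=
  ⋂₀ Exts L₀ R ι form S

/-- The least fixed point of `C` (Knaster–Tarski): the set of accepted conclusions. -/
def lfpC (form : ι → (L₀[[ι]]).Sentence) : (L₀[[ι]]).Theory :=
  sInf {S | C L₀ R ι form S ⊆ S}


section Aux

open Theory

/-- Abbreviation for the sentence `1 < 0`. -/
abbrev SA : (baseLang[[Fin 2]]).Sentence := ltSent baseLang Rsym (Fin 2) 1 0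

/-- Abbreviation for the sentence `0 < 1`. -/
abbrev SB : (baseLang[[Fin 2]]).Sentence := ltSent baseLang Rsym (Fin 2) 0 1

/-- The self-referential default theory. -/
abbrev fm : Fin 2 → (baseLang[[Fin 2]]).Sentence := ![SA, SB]

/-- Deductive closure of the disjunction. -/
abbrev Dset : Set ((baseLang[[Fin 2]]).Sentence) := closure baseLang Rsym (Fin 2) {SA ⊔ SB}

/-- A `baseLang`-structure on `Fin 2` with relation `r`. -/
def bstr (r : Fin 2 → Fin 2 → Prop) : baseLang.Structure (Fin 2) where
  funMap {_} f := Empty.elim f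
  RelMap {n} :=
    match n with
    | 2 => fun _ v => r (v 0) (v 1)
    | 0 => fun R _ => R.elim
    | 1 => fun R _ => R.elim
    | (_+3) => fun R _ => R.elim

/-- The corresponding structure with constants interpreted by `id`. -/
noncomputable def wstr (r : Fin 2 → Fin 2 → Prop) : (baseLang[[Fin 2]]).Structure (Fin 2) :=
  letI := bstr r
  letI : (constantsOn (Fin 2)).Structure (Fin 2) := constantsOn.structure id
  Language.sumStructure _ _ _

lemma realize_lt_wstr (r : Fin 2 → Fin 2 → Prop) (d d' : Fin 2) :
    (letI := wstr r; (ltSent baseLang Rsym (Fin 2) d d').Realize (Fin 2)) ↔ r d d' := by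
  letI := wstr r
  simp only [ltSent, Sentence.Realize, Formula.Realize, BoundedFormula.realize_rel₂]
  rfl

lemma model_spo_wstr (r : Fin 2 → Fin 2 → Prop) (hi : Irreflexive r) (ht : Transitive r) :
    (letI := wstr r; (Fin 2) ⊨ spo baseLang Rsym (Fin 2)) := by
  letI := wstr r
  rw [spo, Theory.model_insert_iff, Theory.model_singleton_iff]
  refine ⟨Relations.realize_irreflexive.2 ?_, Relations.realize_transitive.2 ?_⟩
  · exact ⟨hi⟩
  · exact ⟨fun _ _ _ h h' => ht h h'⟩

/-- `r01` relates only `0 ↝ 1`. -/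
def r01 : Fin 2 → Fin 2 → Prop := fun a b => a = 0 ∧ b = 1

/-- `r10` relates only `1 ↝ 0`. -/
def r10 : Fin 2 → Fin 2 → Prop := fun a b => a = 1 ∧ b = 0

lemma r01_irrefl : Irreflexive r01 := fun a h => by
  simp only [r01] at h; exact absurd (h.1.symm.trans h.2) (by decide)

lemma r01_trans : Transitive r01 := fun a b c h h' => by
  simp only [r01] at *; exact absurd (h.2.symm.trans h'.1) (by decide)

lemma r10_irrefl : Irreflexive r10 := fun a h => by
  simp only [r10] at h; exact absurd (h.1.symm.trans h.2) (by decide)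

lemma r10_trans : Transitive r10 := fun a b c h h' => by
  simp only [r10] at *; exact absurd (h.2.symm.trans h'.1) (by decide)

lemma satA : Consistent baseLang Rsym (Fin 2) {SA} := by
  letI := wstr r10
  haveI : (Fin 2) ⊨ ({SA} : (baseLang[[Fin 2]]).Theory) ∪ spo baseLang Rsym (Fin 2) := by
    rw [Theory.model_union_iff, Theory.model_singleton_iff]
    exact ⟨(realize_lt_wstr r10 1 0).2 ⟨rfl, rfl⟩, model_spo_wstr r10 r10_irrefl r10_trans⟩
  exact Theory.Model.isSatisfiable (Fin 2)

lemma satB : Consistent baseLang Rsym (Fin 2) {SB} := by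
  letI := wstr r01
  haveI : (Fin 2) ⊨ ({SB} : (baseLang[[Fin 2]]).Theory) ∪ spo baseLang Rsym (Fin 2) := by
    rw [Theory.model_union_iff, Theory.model_singleton_iff]
    exact ⟨(realize_lt_wstr r01 0 1).2 ⟨rfl, rfl⟩, model_spo_wstr r01 r01_irrefl r01_trans⟩
  exact Theory.Model.isSatisfiable (Fin 2)

lemma inconsAB : ¬ Consistent baseLang Rsym (Fin 2) ({SA} ∪ {SB}) := by
  rintro ⟨M⟩
  have hA : M ⊨ SA := M.is_model.realize_of_mem SA (by left; left; rfl)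
  have hB : M ⊨ SB := M.is_model.realize_of_mem SB (by left; right; rfl)
  have hirr : M ⊨ (Relations.irreflexive (Sum.inl Rsym) : (baseLang[[Fin 2]]).Sentence) :=
    M.is_model.realize_of_mem _ (by right; left; rfl)
  have htr : M ⊨ (Relations.transitive (Sum.inl Rsym) : (baseLang[[Fin 2]]).Sentence) :=
    M.is_model.realize_of_mem _ (by right; right; rfl)
  replace hirr := Relations.realize_irreflexive.1 hirr
  replace htr := Relations.realize_transitive.1 htr
  simp only [ltSent, Sentence.Realize, Formula.Realize, BoundedFormula.realize_rel₂] at hA hB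
  exact hirr.irrefl _ (htr.trans _ _ _ (BoundedFormula.realize_rel₂.1 hB) (BoundedFormula.realize_rel₂.1 hA))

lemma inconsBA : ¬ Consistent baseLang Rsym (Fin 2) ({SB} ∪ {SA}) := by
  rw [Set.union_comm]; exact inconsAB

lemma sort_univ_pair {r : Fin 2 → Fin 2 → Prop} [DecidableRel r] [IsTrans _ r] [IsAntisymm _ r]
    [IsTotal _ r] (h : ¬ r 1 0) : Finset.univ.sort r = [0, 1] := by
  have hlen : (Finset.univ.sort r).length = 2 := by rw [Finset.length_sort]; simp
  have hnd : (Finset.univ.sort r).Nodup := Finset.sort_nodup _ _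
  have hs : (Finset.univ.sort r).Pairwise r := Finset.pairwise_sort _ _
  match hl : Finset.univ.sort r, hlen, hnd with
  | [a, b], _, hnd =>
    rw [hl] at hs
    have hab : a ≠ b := by simp only [List.nodup_cons] at hnd; simp_all
    have hrab : r a b := by simp only [List.pairwise_cons] at hs; simp_all
    fin_cases a <;> fin_cases b <;> simp_all

lemma sort_univ_pair' {r : Fin 2 → Fin 2 → Prop} [DecidableRel r] [IsTrans _ r] [IsAntisymm _ r]
    [IsTotal _ r] (h : ¬ r 0 1) : Finset.univ.sort r = [1, 0] := by
  have hlen : (Finset.univ.sort r).length = 2 := by rw [Finset.length_sort]; simp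
  have hnd : (Finset.univ.sort r).Nodup := Finset.sort_nodup _ _
  have hs : (Finset.univ.sort r).Pairwise r := Finset.pairwise_sort _ _
  match hl : Finset.univ.sort r, hlen, hnd with
  | [a, b], _, hnd =>
    rw [hl] at hs
    have hab : a ≠ b := by simp only [List.nodup_cons] at hnd; simp_all
    have hrab : r a b := by simp only [List.pairwise_cons] at hs; simp_all
    fin_cases a <;> fin_cases b <;> simp_all

lemma base_eq_A (e : LinearOrder (Fin 2)) (h : e.lt 0 1) :
    base baseLang Rsym (Fin 2) e fm = {SA} := by
  unfold base
  rw [sort_univ_pair ?hr]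
  case hr =>
    intro hle
    exact absurd ((@lt_of_lt_of_le _ (e.toPreorder) _ _ _ h hle)) (@lt_irrefl _ e.toPreorder _)
  simp only [List.foldl_cons, List.foldl_nil]
  have h0 : (∅ : (baseLang[[Fin 2]]).Theory) ∪ {fm 0} = {SA} := by
    rw [Set.empty_union]; rfl
  rw [h0, if_pos satA]
  have h1 : ({SA} : (baseLang[[Fin 2]]).Theory) ∪ {fm 1} = {SA} ∪ {SB} := rfl
  rw [h1, if_neg inconsAB]

lemma base_eq_B (e : LinearOrder (Fin 2)) (h : e.lt 1 0) :
    base baseLang Rsym (Fin 2) e fm = {SB} := by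
  unfold base
  rw [sort_univ_pair' ?hr]
  case hr =>
    intro hle
    exact absurd ((@lt_of_lt_of_le _ (e.toPreorder) _ _ _ h hle)) (@lt_irrefl _ e.toPreorder _)
  simp only [List.foldl_cons, List.foldl_nil]
  have h0 : (∅ : (baseLang[[Fin 2]]).Theory) ∪ {fm 1} = {SB} := by
    rw [Set.empty_union]; rfl
  rw [h0, if_pos satB]
  have h1 : ({SB} : (baseLang[[Fin 2]]).Theory) ∪ {fm 0} = {SB} ∪ {SA} := rfl
  rw [h1, if_neg inconsBA]

lemma realize_sup_iff {M : Type} [Nonempty M] [(baseLang[[Fin 2]]).Structure M] :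
    (M ⊨ SA ⊔ SB) ↔ (M ⊨ SA) ∨ (M ⊨ SB) := by
  simp only [Sentence.Realize, Formula.realize_sup]

lemma D_sub_A : Dset ⊆ closure baseLang Rsym (Fin 2) {SA} := by
  intro φ hφ
  refine models_sentence_iff.2 fun M => ?_
  haveI : (M : Type) ⊨ ({SA ⊔ SB} : (baseLang[[Fin 2]]).Theory) ∪ spo baseLang Rsym (Fin 2) := by
    rw [Theory.model_union_iff, Theory.model_singleton_iff]
    have h1 : (M : Type) ⊨ SA :=
      M.is_model.realize_of_mem SA (by left; rfl)
    have h2 : (M : Type) ⊨ spo baseLang Rsym (Fin 2) :=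
      M.is_model.mono Set.subset_union_right
    exact ⟨realize_sup_iff.2 (Or.inl h1), h2⟩
  exact ModelsBoundedFormula.realize_sentence hφ M

lemma D_sub_B : Dset ⊆ closure baseLang Rsym (Fin 2) {SB} := by
  intro φ hφ
  refine models_sentence_iff.2 fun M => ?_
  haveI : (M : Type) ⊨ ({SA ⊔ SB} : (baseLang[[Fin 2]]).Theory) ∪ spo baseLang Rsym (Fin 2) := by
    rw [Theory.model_union_iff, Theory.model_singleton_iff]
    have h1 : (M : Type) ⊨ SB :=
      M.is_model.realize_of_mem SB (by left; rfl)
    have h2 : (M : Type) ⊨ spo baseLang Rsym (Fin 2) :=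
      M.is_model.mono Set.subset_union_right
    exact ⟨realize_sup_iff.2 (Or.inr h1), h2⟩
  exact ModelsBoundedFormula.realize_sentence hφ M

lemma inter_sub_D :
    closure baseLang Rsym (Fin 2) {SA} ∩ closure baseLang Rsym (Fin 2) {SB} ⊆ Dset := by
  rintro φ ⟨hA, hB⟩
  refine models_sentence_iff.2 fun M => ?_
  have hsup : (M : Type) ⊨ SA ⊔ SB := M.is_model.realize_of_mem _ (by left; rfl)
  have hspo : (M : Type) ⊨ spo baseLang Rsym (Fin 2) := M.is_model.mono Set.subset_union_right
  rcases realize_sup_iff.1 hsup with h | h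
  · haveI : (M : Type) ⊨ ({SA} : (baseLang[[Fin 2]]).Theory) ∪ spo baseLang Rsym (Fin 2) := by
      rw [Theory.model_union_iff, Theory.model_singleton_iff]; exact ⟨h, hspo⟩
    exact ModelsBoundedFormula.realize_sentence hA M
  · haveI : (M : Type) ⊨ ({SB} : (baseLang[[Fin 2]]).Theory) ∪ spo baseLang Rsym (Fin 2) := by
      rw [Theory.model_union_iff, Theory.model_singleton_iff]; exact ⟨h, hspo⟩
    exact ModelsBoundedFormula.realize_sentence hB M

end Aux

section Aux2

open Theory

/-- The standard order on `Fin 2`. -/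
abbrev e0 : LinearOrder (Fin 2) := inferInstance

/-- The reversed order on `Fin 2`. -/
abbrev e1 : LinearOrder (Fin 2) := inferInstanceAs (LinearOrder (Fin 2)ᵒᵈ)

lemma strict01 : IsStrictOrder (Fin 2) r01 where
  irrefl := fun a h => r01_irrefl a h
  trans := fun _ _ _ h h' => r01_trans h h'

lemma strict10 : IsStrictOrder (Fin 2) r10 where
  irrefl := fun a h => r10_irrefl a h
  trans := fun _ _ _ h h' => r10_trans h h'

lemma compat01 : Compatible baseLang Rsym (Fin 2) r01 Dset := by
  letI := wstr r01
  haveI hM : (Fin 2) ⊨ ({SA ⊔ SB} : (baseLang[[Fin 2]]).Theory) ∪ spo baseLang Rsym (Fin 2) := by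
    rw [Theory.model_union_iff, Theory.model_singleton_iff]
    exact ⟨realize_sup_iff.2 (Or.inr ((realize_lt_wstr r01 0 1).2 ⟨rfl, rfl⟩)),
      model_spo_wstr r01 r01_irrefl r01_trans⟩
  haveI : (Fin 2) ⊨ Dset ∪ spo baseLang Rsym (Fin 2) ∪
      {φ | ∃ d d', r01 d d' ∧ φ = ltSent baseLang Rsym (Fin 2) d d'} ∪
      {φ | ∃ d d', ¬ r01 d d' ∧ φ = ∼(ltSent baseLang Rsym (Fin 2) d d')} := by
    rw [Theory.model_union_iff, Theory.model_union_iff, Theory.model_union_iff]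
    refine ⟨⟨⟨⟨fun φ hφ => ModelsBoundedFormula.realize_sentence hφ (Fin 2)⟩,
      model_spo_wstr r01 r01_irrefl r01_trans⟩, ⟨fun φ hφ => ?_⟩⟩, ⟨fun φ hφ => ?_⟩⟩
    · obtain ⟨d, d', hp, rfl⟩ := hφ
      exact (realize_lt_wstr r01 d d').2 hp
    · obtain ⟨d, d', hp, rfl⟩ := hφ
      rw [Sentence.realize_not]
      exact fun hr => hp ((realize_lt_wstr r01 d d').1 hr)
  exact Theory.Model.isSatisfiable (Fin 2)

lemma compat10 : Compatible baseLang Rsym (Fin 2) r10 Dset := by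
  letI := wstr r10
  haveI hM : (Fin 2) ⊨ ({SA ⊔ SB} : (baseLang[[Fin 2]]).Theory) ∪ spo baseLang Rsym (Fin 2) := by
    rw [Theory.model_union_iff, Theory.model_singleton_iff]
    exact ⟨realize_sup_iff.2 (Or.inl ((realize_lt_wstr r10 1 0).2 ⟨rfl, rfl⟩)),
      model_spo_wstr r10 r10_irrefl r10_trans⟩
  haveI : (Fin 2) ⊨ Dset ∪ spo baseLang Rsym (Fin 2) ∪
      {φ | ∃ d d', r10 d d' ∧ φ = ltSent baseLang Rsym (Fin 2) d d'} ∪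
      {φ | ∃ d d', ¬ r10 d d' ∧ φ = ∼(ltSent baseLang Rsym (Fin 2) d d')} := by
    rw [Theory.model_union_iff, Theory.model_union_iff, Theory.model_union_iff]
    refine ⟨⟨⟨⟨fun φ hφ => ModelsBoundedFormula.realize_sentence hφ (Fin 2)⟩,
      model_spo_wstr r10 r10_irrefl r10_trans⟩, ⟨fun φ hφ => ?_⟩⟩, ⟨fun φ hφ => ?_⟩⟩
    · obtain ⟨d, d', hp, rfl⟩ := hφ
      exact (realize_lt_wstr r10 d d').2 hp
    · obtain ⟨d, d', hp, rfl⟩ := hφ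
      rw [Sentence.realize_not]
      exact fun hr => hp ((realize_lt_wstr r10 d d').1 hr)
  exact Theory.Model.isSatisfiable (Fin 2)

lemma extsA : closure baseLang Rsym (Fin 2) {SA} ∈ Exts baseLang Rsym (Fin 2) fm Dset := by
  refine ⟨e0, r01, strict01, compat01, ?_, ?_⟩
  · rintro d d' ⟨rfl, rfl⟩
    exact (by decide : (0 : Fin 2) < 1)
  · rw [extension, base_eq_A e0 (by decide : (0 : Fin 2) < 1)]

lemma extsB : closure baseLang Rsym (Fin 2) {SB} ∈ Exts baseLang Rsym (Fin 2) fm Dset := by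
  refine ⟨e1, r10, strict10, compat10, ?_, ?_⟩
  · rintro d d' ⟨rfl, rfl⟩
    exact (by decide : (0 : Fin 2) < 1)
  · rw [extension, base_eq_B e1 (by decide : (0 : Fin 2) < 1)]

end Aux2

/-- For the self-referential theory, the accepted conclusions are exactly the consequences of
the disjunction `(1 < 0) ∨ (0 < 1)`. -/
theorem selfref_accepted_conclusions :
    lfpC baseLang Rsym (Fin 2)
        ![ltSent baseLang Rsym (Fin 2) 1 0, ltSent baseLang Rsym (Fin 2) 0 1] =
      closure baseLang Rsym (Fin 2)
        {ltSent baseLang Rsym (Fin 2) 1 0 ⊔ ltSent baseLang Rsym (Fin 2) 0 1} := by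
  apply subset_antisymm
  · refine sInf_le ?_
    show C baseLang Rsym (Fin 2) fm Dset ⊆ Dset
    intro φ hφ
    exact inter_sub_D ⟨Set.mem_sInter.1 hφ _ extsA, Set.mem_sInter.1 hφ _ extsB⟩
  · refine le_sInf fun S hS => le_trans ?_ hS
    intro φ hφ
    refine Set.mem_sInter.2 fun E hE => ?_
    obtain ⟨e, p, _hso, _hc, _hext, rfl⟩ := hE
    rcases @lt_trichotomy _ e 0 1 with h | h | h
    · rw [extension, base_eq_A e h]
      exact D_sub_A hφ
    · exact absurd h (by decide)
    · rw [extension, base_eq_B e h]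
      exact D_sub_B hφ

end Brevis
end

section
/- Counterexample to AGM postulate (T*3), revised side: for the preference default theory with ι = Fin 3 (in the language enlarged with P), form 0 = p, form 1 = ¬p, and form 2 = (0 < 1) (i.e. R(c_0, c_1)), the sentence p is an accepted conclusion: p ∈ lfp(C). -/
open FirstOrder Language

namespace Brevis

variable (L₀ : FirstOrder.Language.{0, 0}) (R : L₀.Relations 2) (ι : Type) [Fintype ι]

/-! ### Auxiliary machinery for the counterexample -/

section FoldLemmas
set_option linter.unusedSectionVars false

variable {L₀ R ι} [Fintype ι] {form : ι → (L₀[[ι]]).Sentence}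

theorem Consistent.anti {S S' : (L₀[[ι]]).Theory} (h : Consistent L₀ R ι S') (hs : S ⊆ S') :
    Consistent L₀ R ι S :=
  h.mono (Set.union_subset_union_left _ hs)

open scoped Classical in
/-- The step function of the extension-base fold. -/
noncomputable def stepF (L₀ : FirstOrder.Language.{0, 0}) (R : L₀.Relations 2) (ι : Type)
    [Fintype ι] (form : ι → (L₀[[ι]]).Sentence) (B : (L₀[[ι]]).Theory) (d : ι) :
    (L₀[[ι]]).Theory :=
  if Consistent L₀ R ι (B ∪ {form d}) then B ∪ {form d} else B

theorem subset_stepF (B : (L₀[[ι]]).Theory) (d : ι) : B ⊆ stepF L₀ R ι form B d := by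
  unfold stepF
  split
  · exact Set.subset_union_left
  · exact subset_rfl

theorem subset_foldl_stepF : ∀ (l : List ι) (B : (L₀[[ι]]).Theory),
    B ⊆ l.foldl (stepF L₀ R ι form) B
  | [], _ => subset_rfl
  | d :: l, B => (subset_stepF B d).trans (subset_foldl_stepF l _)

theorem foldl_stepF_subset : ∀ (l : List ι) (B : (L₀[[ι]]).Theory),
    l.foldl (stepF L₀ R ι form) B ⊆ B ∪ {φ | ∃ d ∈ l, φ = form d}
  | [], B => by simp
  | d :: l, B => by
    intro φ hφ
    rcases foldl_stepF_subset l (stepF L₀ R ι form B d) hφ with h | h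
    · unfold stepF at h
      split at h
      · rcases h with h | h
        · exact Or.inl h
        · exact Or.inr ⟨d, List.mem_cons_self, h⟩
      · exact Or.inl h
    · obtain ⟨d', hd', hform⟩ := h
      exact Or.inr ⟨d', List.mem_cons_of_mem d hd', hform⟩

theorem consistent_foldl_stepF : ∀ (l : List ι) (B : (L₀[[ι]]).Theory),
    Consistent L₀ R ι B → Consistent L₀ R ι (l.foldl (stepF L₀ R ι form) B)
  | [], _, hB => hB
  | d :: l, B, hB => by
    refine consistent_foldl_stepF l _ ?_
    unfold stepF
    split
    · assumption
    · exact hB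

theorem mem_foldl_stepF_or : ∀ (l : List ι) (B : (L₀[[ι]]).Theory) {d : ι}, d ∈ l →
    form d ∈ l.foldl (stepF L₀ R ι form) B ∨
      ¬Consistent L₀ R ι (l.foldl (stepF L₀ R ι form) B ∪ {form d})
  | [], _, _, hd => absurd hd List.not_mem_nil
  | a :: l, B, d, hd => by
    rcases List.mem_cons.1 hd with rfl | hd
    · rw [List.foldl_cons]
      by_cases hc : Consistent L₀ R ι (B ∪ {form d})
      · left
        refine subset_foldl_stepF l _ ?_
        unfold stepF
        rw [if_pos hc]
        exact Set.mem_union_right _ rfl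
      · have hstep : stepF L₀ R ι form B d = B := if_neg hc
        right
        rw [hstep]
        intro hcon
        exact hc (hcon.anti (Set.union_subset_union_left _ (subset_foldl_stepF l B)))
    · exact mem_foldl_stepF_or l _ hd

end FoldLemmas

section Concrete

/-- The structure of `baseLangP` on `Fin 3` interpreting `R` as `<` and `P` as `b`. -/
def pStruc (b : Prop) : baseLangP.Structure (Fin 3) where
  funMap := fun {_} f => f.elim
  RelMap := fun {n} r =>
    match n, r with
    | 0, _ => fun _ => b
    | 2, _ => fun v => v 0 < v 1

/-- The structure of `baseLangP[[Fin 3]]` on `Fin 3` interpreting `R` as `<`, `P` as `b`,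
and the constants as themselves. -/
def fullStruc (b : Prop) : (baseLangP[[Fin 3]]).Structure (Fin 3) :=
  letI := pStruc b
  letI : (constantsOn (Fin 3)).Structure (Fin 3) := constantsOn.structure id
  Language.sumStructure _ _ _

theorem realize_pSent (b : Prop) :
    @Sentence.Realize _ (Fin 3) (fullStruc b) (pSent (Fin 3)) ↔ b :=
  Iff.rfl

theorem realize_ltSent (b : Prop) (d d' : Fin 3) :
    @Sentence.Realize _ (Fin 3) (fullStruc b)
      (ltSent baseLangP RsymP (Fin 3) d d') ↔ d < d' :=
  Iff.rfl

theorem realize_notPSent (b : Prop) :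
    @Sentence.Realize _ (Fin 3) (fullStruc b) (∼(pSent (Fin 3))) ↔ ¬b :=
  Iff.rfl

theorem consistent_of (b : Prop) {S : (baseLangP[[Fin 3]]).Theory}
    (h : ∀ φ ∈ S, @Sentence.Realize _ (Fin 3) (fullStruc b) φ) :
    Consistent baseLangP RsymP (Fin 3) S := by
  letI := fullStruc b
  have hm : @Theory.Model _ (Fin 3) (fullStruc b) (S ∪ spo baseLangP RsymP (Fin 3)) := ⟨?_⟩
  · exact ⟨@Theory.ModelType.mk _ _ (Fin 3) (fullStruc b) hm inferInstance⟩
  intro φ hφ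
  rcases hφ with hφ | hφ
  · exact h φ hφ
  · rcases hφ with rfl | hφ
    · exact (Relations.realize_irreflexive).2 ⟨fun x => lt_irrefl x⟩
    · rw [Set.mem_singleton_iff] at hφ
      subst hφ
      exact (Relations.realize_transitive).2 ⟨fun x y z (h1 : x < y) (h2 : y < z) => lt_trans h1 h2⟩

end Concrete


/-- The default theory of the counterexample. -/
abbrev forms3 : Fin 3 → (baseLangP[[Fin 3]]).Sentence :=
  ![pSent (Fin 3), ∼(pSent (Fin 3)), ltSent baseLangP RsymP (Fin 3) 0 1]

/-- The list of names sorted by a linear order `e`. -/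
noncomputable def baseListG (ι : Type) [Fintype ι] (e : LinearOrder ι) : List ι :=
  letI := e
  Finset.univ.sort (· ≤ · : ι → ι → Prop)

/-- The list of names sorted by the linear order `e`. -/
noncomputable abbrev baseList (e : LinearOrder (Fin 3)) : List (Fin 3) :=
  baseListG (Fin 3) e

theorem base_eq (e : LinearOrder (Fin 3)) :
    base baseLangP RsymP (Fin 3) e forms3 =
      (baseList e).foldl (stepF baseLangP RsymP (Fin 3) forms3) ∅ :=
  rfl

theorem mem_baseList (e : LinearOrder (Fin 3)) (d : Fin 3) : d ∈ baseList e := by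
  unfold baseList baseListG
  exact (Finset.mem_sort _).2 (Finset.mem_univ _)

theorem nodup_baseList (e : LinearOrder (Fin 3)) : (baseList e).Nodup := by
  unfold baseList baseListG
  exact Finset.sort_nodup _ _

theorem sorted_baseList (e : LinearOrder (Fin 3)) : (baseList e).Pairwise e.le := by
  unfold baseList baseListG
  exact Finset.pairwise_sort _ _

theorem base_subset (e : LinearOrder (Fin 3)) :
    base baseLangP RsymP (Fin 3) e forms3 ⊆ {φ | ∃ d : Fin 3, φ = forms3 d} := by
  rw [base_eq]
  intro φ hφ
  rcases foldl_stepF_subset _ _ hφ with h | ⟨d, _, rfl⟩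
  · exact absurd h (Set.notMem_empty φ)
  · exact ⟨d, rfl⟩

theorem base_consistent (e : LinearOrder (Fin 3)) :
    Consistent baseLangP RsymP (Fin 3) (base baseLangP RsymP (Fin 3) e forms3) := by
  rw [base_eq]
  exact consistent_foldl_stepF _ _
    (consistent_of True (fun φ hφ => absurd hφ (Set.notMem_empty φ)))

theorem pSent_not_mem_of_notPSent_mem (e : LinearOrder (Fin 3))
    (h : ∼(pSent (Fin 3)) ∈ base baseLangP RsymP (Fin 3) e forms3) :
    pSent (Fin 3) ∉ base baseLangP RsymP (Fin 3) e forms3 := by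
  intro hp
  obtain ⟨M⟩ := base_consistent e
  have h1 : M ⊨ pSent (Fin 3) :=
    Theory.realize_sentence_of_mem
      (base baseLangP RsymP (Fin 3) e forms3 ∪ spo baseLangP RsymP (Fin 3))
      (Set.mem_union_left _ hp)
  have h2 : M ⊨ ∼(pSent (Fin 3)) :=
    Theory.realize_sentence_of_mem
      (base baseLangP RsymP (Fin 3) e forms3 ∪ spo baseLangP RsymP (Fin 3))
      (Set.mem_union_left _ h)
  exact (Sentence.realize_not _).1 h2 h1

theorem ltSent_mem_base (e : LinearOrder (Fin 3)) :
    ltSent baseLangP RsymP (Fin 3) 0 1 ∈ base baseLangP RsymP (Fin 3) e forms3 := by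
  have := mem_foldl_stepF_or (R := RsymP) (form := forms3) (baseList e) ∅ (mem_baseList e 2)
  rw [← base_eq e] at this
  rcases this with h | h
  · exact h
  · exfalso
    apply h
    apply consistent_of (pSent (Fin 3) ∈ base baseLangP RsymP (Fin 3) e forms3)
    intro φ hφ
    rcases hφ with hφ | hφ
    · obtain ⟨d, rfl⟩ := base_subset e hφ
      fin_cases d
      · exact (realize_pSent _).2 hφ
      · exact (realize_notPSent _).2 (pSent_not_mem_of_notPSent_mem e hφ)
      · exact (realize_ltSent _ 0 1).2 (by decide)
    · rw [Set.mem_singleton_iff] at hφ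
      subst hφ
      exact (realize_ltSent _ 0 1).2 (by decide)

theorem pSent_mem_base (e : LinearOrder (Fin 3)) (h01 : e.lt 0 1) :
    pSent (Fin 3) ∈ base baseLangP RsymP (Fin 3) e forms3 := by
  obtain ⟨a, c, hl⟩ := List.append_of_mem (mem_baseList e 1)
  have hnd := nodup_baseList e
  have hsort := sorted_baseList e
  have h0l := mem_baseList e 0
  rw [hl] at hnd hsort h0l
  have h0a : (0 : Fin 3) ∈ a := by
    rcases List.mem_append.1 h0l with h | h
    · exact h
    · rcases List.mem_cons.1 h with h | h
      · exact absurd h (by decide)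
      · have hle : e.le 1 0 :=
          (List.pairwise_cons.1 (List.pairwise_append.1 hsort).2.1).1 0 h
        exact absurd hle ((@lt_iff_le_not_ge _ e.toPreorder 0 1).1 h01).2
  have h1a : (1 : Fin 3) ∉ a := fun h =>
    (List.disjoint_of_nodup_append hnd) h List.mem_cons_self
  have hBa_sub : a.foldl (stepF baseLangP RsymP (Fin 3) forms3) ∅ ⊆
      {φ | φ = pSent (Fin 3) ∨ φ = ltSent baseLangP RsymP (Fin 3) 0 1} := by
    intro φ hφ
    rcases foldl_stepF_subset _ _ hφ with h | ⟨d, hd, rfl⟩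
    · exact absurd h (Set.notMem_empty φ)
    · fin_cases d
      · exact Or.inl rfl
      · exact absurd hd h1a
      · exact Or.inr rfl
  have hpBa : pSent (Fin 3) ∈ a.foldl (stepF baseLangP RsymP (Fin 3) forms3) ∅ := by
    rcases mem_foldl_stepF_or (R := RsymP) (form := forms3) a ∅ h0a with h | h
    · exact h
    · exfalso
      apply h
      apply consistent_of True
      intro φ hφ
      rcases hφ with hφ | hφ
      · rcases hBa_sub hφ with rfl | rfl
        · exact (realize_pSent _).2 trivial
        · exact (realize_ltSent _ 0 1).2 (by decide)
      · rw [Set.mem_singleton_iff] at hφ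
        subst hφ
        exact (realize_pSent _).2 trivial
  rw [base_eq e, hl, List.foldl_append]
  exact subset_foldl_stepF _ _ hpBa

theorem mem_extension_of_mem_base {e : LinearOrder (Fin 3)}
    {fs : Fin 3 → (baseLangP[[Fin 3]]).Sentence} {φ : (baseLangP[[Fin 3]]).Sentence}
    (h : φ ∈ base baseLangP RsymP (Fin 3) e fs) :
    φ ∈ extension baseLangP RsymP (Fin 3) e fs :=
  Theory.models_sentence_of_mem (Set.mem_union_left _ h)

theorem compatible_zero_one {S : (baseLangP[[Fin 3]]).Theory}
    (hS : ltSent baseLangP RsymP (Fin 3) 0 1 ∈ S) {q : Fin 3 → Fin 3 → Prop}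
    (hq : Compatible baseLangP RsymP (Fin 3) q S) : q 0 1 := by
  by_contra h
  obtain ⟨M⟩ := hq
  have h1 : M ⊨ ltSent baseLangP RsymP (Fin 3) 0 1 :=
    Theory.realize_sentence_of_mem
      (S ∪ spo baseLangP RsymP (Fin 3) ∪
        {φ | ∃ d d', q d d' ∧ φ = ltSent baseLangP RsymP (Fin 3) d d'} ∪
        {φ | ∃ d d', ¬ q d d' ∧ φ = ∼(ltSent baseLangP RsymP (Fin 3) d d')})
      (Set.mem_union_left _ (Set.mem_union_left _ (Set.mem_union_left _ hS)))
  have h2 : M ⊨ ∼(ltSent baseLangP RsymP (Fin 3) 0 1) :=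
    Theory.realize_sentence_of_mem
      (S ∪ spo baseLangP RsymP (Fin 3) ∪
        {φ | ∃ d d', q d d' ∧ φ = ltSent baseLangP RsymP (Fin 3) d d'} ∪
        {φ | ∃ d d', ¬ q d d' ∧ φ = ∼(ltSent baseLangP RsymP (Fin 3) d d')})
      (Set.mem_union_right _ ⟨0, 1, h, rfl⟩)
  exact (Sentence.realize_not _).1 h2 h1

/-- Counterexample to (T*3), revised side: for the theory `{p, ¬p, 0 < 1}`,
`p` is an accepted conclusion. -/
theorem counterexample_T3_revised :
    pSent (Fin 3) ∈ lfpC baseLangP RsymP (Fin 3)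
      ![pSent (Fin 3), ∼(pSent (Fin 3)), ltSent baseLangP RsymP (Fin 3) 0 1] := by
  rw [lfpC, Set.sInf_eq_sInter]
  apply Set.mem_sInter.2
  intro S hS
  have hf2S : ltSent baseLangP RsymP (Fin 3) 0 1 ∈ S := by
    apply hS
    apply Set.mem_sInter.2
    rintro E ⟨e, q, _, _, _, rfl⟩
    exact mem_extension_of_mem_base (ltSent_mem_base e)
  apply hS
  apply Set.mem_sInter.2
  rintro E ⟨e, q, hso, hcomp, hext, rfl⟩
  exact mem_extension_of_mem_base
    (pSent_mem_base e (hext 0 1 (compatible_zero_one hf2S hcomp)))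

end Brevis
end

section
/- Counterexample to AGM postulate (T*7): let ι = Fin 4 (in the language enlarged with P). (i) For the theory form with form 0 = p, form 1 = ¬p, form 2 = ¬p, form 3 = (0 < 1) ∧ (0 < 2) (conjunction of the atomic sentences R(c_0, c_1) and R(c_0, c_2)), p is an accepted conclusion: p ∈ lfp(C_form). (ii) For the theory form' identical to form except form' 3 = (0 < 1), p is not an accepted conclusion, and moreover p is not satisfied in some model of lfp(C_{form'}) ∪ {(0 < 2)} ∪ SPO (i.e. p is not a semantic consequence of the belief set expanded with (0 < 2)). -/
open FirstOrder Language

namespace Brevis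

variable (L₀ : FirstOrder.Language.{0, 0}) (R : L₀.Relations 2) (ι : Type) [Fintype ι]

section Aux

/-! ### Concrete structures on `Fin 4` -/

/-- A `baseLangP`-structure on `Fin 4` given by a binary relation and a proposition. -/
def pStruct (Rr : Fin 4 → Fin 4 → Prop) (Pv : Prop) : baseLangP.Structure (Fin 4) where
  funMap := fun {_} f _ => f.elim
  RelMap := fun {n} r v =>
    match n, r with
    | 0, _ => Pv
    | 1, r => r.elim
    | 2, _ => Rr (v 0) (v 1)
    | (_+3), r => r.elim

/-- The corresponding structure for the language with constants, interpreting `c_d` as `d`. -/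
def mkStruct (Rr : Fin 4 → Fin 4 → Prop) (Pv : Prop) :
    (baseLangP[[Fin 4]]).Structure (Fin 4) :=
  letI := pStruct Rr Pv
  letI : (constantsOn (Fin 4)).Structure (Fin 4) := constantsOn.structure id
  Language.sumStructure _ _ _

lemma realize_pSent_s15 (Rr : Fin 4 → Fin 4 → Prop) (Pv : Prop) :
    (letI := mkStruct Rr Pv; (Fin 4) ⊨ pSent (Fin 4)) ↔ Pv :=
  ⟨fun h => h, fun h => h⟩

lemma realize_ltSent_s15 (Rr : Fin 4 → Fin 4 → Prop) (Pv : Prop) (d d' : Fin 4) :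
    (letI := mkStruct Rr Pv; (Fin 4) ⊨ ltSent baseLangP RsymP (Fin 4) d d') ↔ Rr d d' :=
  ⟨fun h => h, fun h => h⟩

lemma models_spo (Rr : Fin 4 → Fin 4 → Prop) (Pv : Prop)
    (h1 : ∀ a, ¬ Rr a a) (h2 : ∀ a b c, Rr a b → Rr b c → Rr a c) :
    letI := mkStruct Rr Pv; (Fin 4) ⊨ spo baseLangP RsymP (Fin 4) := by
  letI := mkStruct Rr Pv
  rw [Theory.model_iff]
  intro φ hφ
  rcases hφ with rfl | hφ
  · exact Relations.realize_irreflexive.2 ⟨fun a => h1 a⟩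
  · rw [Set.mem_singleton_iff] at hφ; subst hφ
    exact Relations.realize_transitive.2 ⟨fun a b c hab hbc => h2 a b c hab hbc⟩

lemma sat_of_model (Rr : Fin 4 → Fin 4 → Prop) (Pv : Prop) (T : (baseLangP[[Fin 4]]).Theory)
    (h : letI := mkStruct Rr Pv; (Fin 4) ⊨ T) : T.IsSatisfiable := by
  letI := mkStruct Rr Pv
  haveI := h
  exact ⟨Theory.ModelType.of T (Fin 4)⟩

/-- Realizing a conjunction of sentences. -/
lemma sentence_realize_inf {M : Type} [(baseLangP[[Fin 4]]).Structure M]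
    (φ ψ : (baseLangP[[Fin 4]]).Sentence) : M ⊨ (φ ⊓ ψ) ↔ (M ⊨ φ ∧ M ⊨ ψ) :=
  Formula.realize_inf

/-- Realizing a sentence of the theory in a bundled model. -/
lemma realize_of_modelType {T : (baseLangP[[Fin 4]]).Theory} (M : T.ModelType)
    {φ : (baseLangP[[Fin 4]]).Sentence} (h : φ ∈ T) : (M : Type) ⊨ φ :=
  Theory.realize_sentence_of_mem (M := M) T h

/-! ### Abbreviations -/

local notation "p4" => pSent (Fin 4)
local notation "lt4" => ltSent baseLangP RsymP (Fin 4)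

/-- The canonical model relation `{(0,1), (0,2)}`. -/
def Rr0 : Fin 4 → Fin 4 → Prop := fun a b => a = 0 ∧ (b = 1 ∨ b = 2)

lemma Rr0_irrefl : ∀ a, ¬ Rr0 a a := by
  rintro a ⟨rfl, h⟩; rcases h with h | h <;> exact absurd h (by decide)
lemma Rr0_trans : ∀ a b c, Rr0 a b → Rr0 b c → Rr0 a c := by
  rintro a b c ⟨rfl, hb⟩ ⟨hb0, _⟩
  rcases hb with rfl | rfl <;> exact absurd hb0 (by decide)

/-- The model relation `{(0,1)}`. -/
def Rr1 : Fin 4 → Fin 4 → Prop := fun a b => a = 0 ∧ b = 1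

lemma Rr1_irrefl : ∀ a, ¬ Rr1 a a := by
  rintro a ⟨rfl, h⟩; exact absurd h (by decide)
lemma Rr1_trans : ∀ a b c, Rr1 a b → Rr1 b c → Rr1 a c := by
  rintro a b c ⟨rfl, rfl⟩ ⟨hb0, _⟩; exact absurd hb0 (by decide)

/-- Any subset of the possible default sentences not containing both `p` and `¬p`
is consistent. -/
lemma consistent_of_subset (T : (baseLangP[[Fin 4]]).Theory)
    (hsub : T ⊆ {p4, ∼p4, lt4 0 1 ⊓ lt4 0 2, lt4 0 1, lt4 0 2})
    (hnb : ¬(p4 ∈ T ∧ ∼p4 ∈ T)) :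
    Consistent baseLangP RsymP (Fin 4) T := by
  apply sat_of_model Rr0 (∼p4 ∉ T)
  letI := mkStruct Rr0 (∼p4 ∉ T)
  rw [Theory.model_iff]
  intro φ hφ
  rcases hφ with hφ | hφ
  · rcases hsub hφ with rfl | rfl | rfl | rfl | rfl
    · exact (realize_pSent_s15 _ _).2 fun hn => hnb ⟨hφ, hn⟩
    · refine (Sentence.realize_not (M := Fin 4)).2 fun hp => ?_
      exact ((realize_pSent_s15 Rr0 (∼p4 ∉ T)).1 hp) hφ
    · exact (sentence_realize_inf _ _).2
        ⟨(realize_ltSent_s15 _ _ 0 1).2 ⟨rfl, Or.inl rfl⟩,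
         (realize_ltSent_s15 _ _ 0 2).2 ⟨rfl, Or.inr rfl⟩⟩
    · exact (realize_ltSent_s15 _ _ 0 1).2 ⟨rfl, Or.inl rfl⟩
    · exact (realize_ltSent_s15 _ _ 0 2).2 ⟨rfl, Or.inr rfl⟩
  · haveI := models_spo Rr0 (∼p4 ∉ T) Rr0_irrefl Rr0_trans
    exact Theory.realize_sentence_of_mem (spo baseLangP RsymP (Fin 4)) hφ

/-- No satisfiable theory contains both `p` and `¬p`. -/
lemma not_sat_both (T : (baseLangP[[Fin 4]]).Theory) (hp : p4 ∈ T) (hnp : ∼p4 ∈ T) :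
    ¬ T.IsSatisfiable := by
  rintro ⟨M⟩
  have h1 : M ⊨ p4 := Theory.realize_sentence_of_mem (M := M) T hp
  have h2 : M ⊨ ∼p4 := Theory.realize_sentence_of_mem (M := M) T hnp
  rw [Sentence.realize_not] at h2
  exact h2 h1

/-! ### Generic lemmas on the fold computing extension bases -/

section Fold

variable (form : Fin 4 → (baseLangP[[Fin 4]]).Sentence)
variable (g : (baseLangP[[Fin 4]]).Theory → Fin 4 → (baseLangP[[Fin 4]]).Theory)
variable (hg : ∀ B d, (g B d = B ∪ {form d} ∧
    Consistent baseLangP RsymP (Fin 4) (B ∪ {form d})) ∨ g B d = B)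
variable (hg2 : ∀ B d, Consistent baseLangP RsymP (Fin 4) (B ∪ {form d}) →
    g B d = B ∪ {form d})

/-- The invariant: the base is a set of default sentences not containing both `p` and `¬p`. -/
def Inv (B : (baseLangP[[Fin 4]]).Theory) : Prop :=
  B ⊆ {p4, ∼p4, form 3} ∧ ¬(p4 ∈ B ∧ ∼p4 ∈ B)

include hg

lemma subset_foldl : ∀ (l : List (Fin 4)) B, B ⊆ l.foldl g B := by
  intro l
  induction l with
  | nil => exact fun B => subset_rfl
  | cons d t ih =>
    intro B x hx
    refine ih (g B d) ?_
    rcases hg B d with ⟨h, _⟩ | h <;> rw [h]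
    · exact Or.inl hx
    · exact hx

lemma foldl_inv (hform : ∀ d, form d ∈ ({p4, ∼p4, form 3} : Set _)) :
    ∀ (l : List (Fin 4)) B, Inv form B → Inv form (l.foldl g B) := by
  intro l
  induction l with
  | nil => exact fun B hB => hB
  | cons d t ih =>
    intro B hB
    refine ih (g B d) ?_
    rcases hg B d with ⟨h, hc⟩ | h <;> rw [h]
    · constructor
      · rintro x (hx | hx)
        · exact hB.1 hx
        · rw [Set.mem_singleton_iff] at hx; subst hx; exact hform d
      · rintro ⟨h1, h2⟩
        exact not_sat_both _ (Set.mem_union_left _ h1) (Set.mem_union_left _ h2) hc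
    · exact hB

include hg2

/-- If the sentence named `3` is consistent with every invariant base,
it ends up in the fold whenever `3` is in the list. -/
lemma mem_foldl_three
    (hform : ∀ d, form d ∈ ({p4, ∼p4, form 3} : Set _))
    (hcons : ∀ B, Inv form B →
      Consistent baseLangP RsymP (Fin 4) (B ∪ {form 3})) :
    ∀ (l : List (Fin 4)) B, Inv form B → (3 : Fin 4) ∈ l →
      form 3 ∈ l.foldl g B := by
  intro l
  induction l with
  | nil => intro B _ h; exact absurd h List.not_mem_nil
  | cons d t ih =>
    intro B hB h3
    by_cases hd : d = 3
    · subst hd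
      have hstep : g B 3 = B ∪ {form 3} := hg2 B 3 (hcons B hB)
      refine subset_foldl form g hg t (g B 3) ?_
      rw [hstep]; exact Or.inr rfl
    · have h3t : (3 : Fin 4) ∈ t := by
        rcases List.mem_cons.1 h3 with h | h
        · exact absurd h.symm hd
        · exact h
      refine ih (g B d) ?_ h3t
      rcases hg B d with ⟨h, hc⟩ | h <;> rw [h]
      · constructor
        · rintro x (hx | hx)
          · exact hB.1 hx
          · rw [Set.mem_singleton_iff] at hx; subst hx; exact hform d
        · rintro ⟨h1, h2⟩
          exact not_sat_both _ (Set.mem_union_left _ h1) (Set.mem_union_left _ h2) hc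
      · exact hB

end Fold


/-! ### Splitting the fold at the name `0` -/

section Fold2

variable (form : Fin 4 → (baseLangP[[Fin 4]]).Sentence)
variable (g : (baseLangP[[Fin 4]]).Theory → Fin 4 → (baseLangP[[Fin 4]]).Theory)
variable (hg : ∀ B d, (g B d = B ∪ {form d} ∧
    Consistent baseLangP RsymP (Fin 4) (B ∪ {form d})) ∨ g B d = B)
variable (hg2 : ∀ B d, Consistent baseLangP RsymP (Fin 4) (B ∪ {form d}) →
    g B d = B ∪ {form d})

include hg

lemma foldl_subset_three :
    ∀ (a : List (Fin 4)), (∀ x ∈ a, x = 3) → ∀ B,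
      B ⊆ {form 3} → a.foldl g B ⊆ {form 3} := by
  intro a
  induction a with
  | nil => exact fun _ B hB => hB
  | cons d t ih =>
    intro h B hB
    have hd : d = 3 := h d List.mem_cons_self
    subst hd
    refine ih (fun x hx => h x (List.mem_cons_of_mem _ hx)) (g B 3) ?_
    rcases hg B 3 with ⟨h', _⟩ | h' <;> rw [h']
    · rintro x (hx | hx)
      · exact hB hx
      · exact hx
    · exact hB

include hg2

lemma mem_foldl_split (d₀ : Fin 4)
    (hcons0 : ∀ B, B ⊆ {form 3} →
      Consistent baseLangP RsymP (Fin 4) (B ∪ {form d₀}))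
    (a b : List (Fin 4)) (ha : ∀ x ∈ a, x = 3) :
    form d₀ ∈ (a ++ d₀ :: b).foldl g ∅ := by
  rw [List.foldl_append, List.foldl_cons]
  have hB' : a.foldl g ∅ ⊆ {form 3} :=
    foldl_subset_three form g hg a ha ∅ (Set.empty_subset _)
  have hstep : g (a.foldl g ∅) d₀ = a.foldl g ∅ ∪ {form d₀} :=
    hg2 _ _ (hcons0 _ hB')
  refine subset_foldl form g hg b _ ?_
  rw [hstep]
  exact Or.inr rfl

end Fold2

/-! ### Lists sorted with respect to a linear order on `Fin 4` -/

/-- The `≤` relation of a linear order, as an explicit relation. -/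
def eLE (e : LinearOrder (Fin 4)) : Fin 4 → Fin 4 → Prop := fun a b => e.le a b

lemma e_not_le (e : LinearOrder (Fin 4)) {a b : Fin 4} (h : e.lt a b) : ¬ eLE e b a :=
  ((@lt_iff_le_not_ge (Fin 4) e.toPartialOrder.toPreorder a b).1 h).2

lemma eq_univ_list (e : LinearOrder (Fin 4)) (l m : List (Fin 4))
    (hsort : l.Pairwise (eLE e)) (hnd : l.Nodup) (hmem : ∀ x, x ∈ l)
    (hsort' : m.Pairwise (eLE e)) (hnd' : m.Nodup) (hmem' : ∀ x, x ∈ m) :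
    l = m := by
  haveI : Std.Antisymm (eLE e) :=
    ⟨fun a b h1 h2 => @le_antisymm (Fin 4) e.toPartialOrder a b h1 h2⟩
  refine List.Perm.eq_of_pairwise' hsort hsort' ?_
  refine List.perm_of_nodup_nodup_toFinset_eq hnd hnd' ?_
  ext x
  simp only [List.mem_toFinset]
  exact iff_of_true (hmem x) (hmem' x)

lemma prefix_elems (e : LinearOrder (Fin 4)) (a b : List (Fin 4))
    (hsort : (a ++ 0 :: b).Pairwise (eLE e)) (hnd : (a ++ 0 :: b).Nodup)
    (h01 : ¬ eLE e 1 0) (h02 : ¬ eLE e 2 0) :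
    ∀ x ∈ a, x = 3 := by
  intro x hx
  have hle : eLE e x 0 := by
    rcases List.pairwise_append.1 hsort with ⟨_, _, hcross⟩
    exact hcross x hx 0 List.mem_cons_self
  have hne : x ≠ 0 := by
    rcases List.nodup_append.1 hnd with ⟨_, _, hdisj⟩
    intro h; subst h
    exact hdisj _ hx _ List.mem_cons_self rfl
  fin_cases x
  · exact absurd rfl hne
  · exact absurd hle h01
  · exact absurd hle h02
  · rfl

/-! ### Properties of `base` -/

open scoped Classical in
/-- Glue lemma: any property of folds of "consistent-extension" steps over a sorted,
nodup enumeration of `Fin 4` holds of `base`. -/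
lemma base_glue (e : LinearOrder (Fin 4)) (form : Fin 4 → (baseLangP[[Fin 4]]).Sentence)
    (P : (baseLangP[[Fin 4]]).Theory → Prop)
    (H : ∀ (g : (baseLangP[[Fin 4]]).Theory → Fin 4 → (baseLangP[[Fin 4]]).Theory),
      (∀ B d, (g B d = B ∪ {form d} ∧
        Consistent baseLangP RsymP (Fin 4) (B ∪ {form d})) ∨ g B d = B) →
      (∀ B d, Consistent baseLangP RsymP (Fin 4) (B ∪ {form d}) →
        g B d = B ∪ {form d}) →
      ∀ (l : List (Fin 4)), l.Pairwise (eLE e) → l.Nodup → (∀ x, x ∈ l) →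
      P (l.foldl g ∅)) :
    P (base baseLangP RsymP (Fin 4) e form) := by
  unfold base
  refine H _ (fun B d => ?_) (fun B d h => ?_) _ ?_ ?_ ?_
  · split
    · exact Or.inl ⟨rfl, by assumption⟩
    · exact Or.inr rfl
  · rw [if_pos h]
  · refine List.Pairwise.imp ?_ (Finset.pairwise_sort _ _)
    exact fun h => h
  · exact Finset.sort_nodup _ _
  · exact fun x => (Finset.mem_sort _).2 (Finset.mem_univ x)

end Aux

section Main

local notation "p4" => pSent (Fin 4)
local notation "lt4" => ltSent baseLangP RsymP (Fin 4)

/-- The empty relation. -/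
def Rempty : Fin 4 → Fin 4 → Prop := fun _ _ => False

lemma Rempty_irrefl : ∀ a : Fin 4, ¬ Rempty a a := fun _ h => h
lemma Rempty_trans : ∀ a b c : Fin 4, Rempty a b → Rempty b c → Rempty a c :=
  fun _ _ _ h => h.elim

/-! ### Distinctness of the relevant sentences -/

lemma p_ne_notp : p4 ≠ ∼p4 := by
  intro h
  letI := mkStruct Rempty True
  have h1 : (Fin 4) ⊨ p4 := (realize_pSent_s15 Rempty True).2 trivial
  have h2 : (Fin 4) ⊨ ∼p4 := h ▸ h1
  rw [Sentence.realize_not] at h2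
  exact h2 h1

lemma p_ne_conj : p4 ≠ lt4 0 1 ⊓ lt4 0 2 := by
  intro h
  letI := mkStruct Rempty True
  have h1 : (Fin 4) ⊨ p4 := (realize_pSent_s15 Rempty True).2 trivial
  have h2 : (Fin 4) ⊨ (lt4 0 1 ⊓ lt4 0 2) := h ▸ h1
  exact (realize_ltSent_s15 Rempty True 0 1).1 ((sentence_realize_inf _ _).1 h2).1

lemma p_ne_lt01 : p4 ≠ lt4 0 1 := by
  intro h
  letI := mkStruct Rempty True
  have h1 : (Fin 4) ⊨ p4 := (realize_pSent_s15 Rempty True).2 trivial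
  have h2 : (Fin 4) ⊨ lt4 0 1 := h ▸ h1
  exact (realize_ltSent_s15 Rempty True 0 1).1 h2

lemma notp_ne_conj : ∼p4 ≠ lt4 0 1 ⊓ lt4 0 2 := by
  intro h
  letI := mkStruct Rr0 True
  have h1 : (Fin 4) ⊨ (lt4 0 1 ⊓ lt4 0 2) := (sentence_realize_inf _ _).2
    ⟨(realize_ltSent_s15 Rr0 True 0 1).2 ⟨rfl, Or.inl rfl⟩,
     (realize_ltSent_s15 Rr0 True 0 2).2 ⟨rfl, Or.inr rfl⟩⟩
  have h2 : (Fin 4) ⊨ ∼p4 := h ▸ h1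
  rw [Sentence.realize_not] at h2
  exact h2 ((realize_pSent_s15 Rr0 True).2 trivial)

lemma notp_ne_lt01 : ∼p4 ≠ lt4 0 1 := by
  intro h
  letI := mkStruct Rr0 True
  have h1 : (Fin 4) ⊨ lt4 0 1 := (realize_ltSent_s15 Rr0 True 0 1).2 ⟨rfl, Or.inl rfl⟩
  have h2 : (Fin 4) ⊨ ∼p4 := h ▸ h1
  rw [Sentence.realize_not] at h2
  exact h2 ((realize_pSent_s15 Rr0 True).2 trivial)

/-! ### The two default theories -/

/-- `form1`: the defaults of part (i). -/
def form1 : Fin 4 → (baseLangP[[Fin 4]]).Sentence :=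
  ![p4, ∼p4, ∼p4, lt4 0 1 ⊓ lt4 0 2]

/-- `form2`: the defaults of part (ii). -/
def form2 : Fin 4 → (baseLangP[[Fin 4]]).Sentence :=
  ![p4, ∼p4, ∼p4, lt4 0 1]

lemma hform1 : ∀ d, form1 d ∈ ({p4, ∼p4, form1 3} : Set _) := by
  intro d
  fin_cases d
  · exact Set.mem_insert _ _
  · exact Set.mem_insert_of_mem _ (Set.mem_insert _ _)
  · exact Set.mem_insert_of_mem _ (Set.mem_insert _ _)
  · exact Set.mem_insert_of_mem _ (Set.mem_insert_of_mem _ rfl)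

lemma hform2 : ∀ d, form2 d ∈ ({p4, ∼p4, form2 3} : Set _) := by
  intro d
  fin_cases d
  · exact Set.mem_insert _ _
  · exact Set.mem_insert_of_mem _ (Set.mem_insert _ _)
  · exact Set.mem_insert_of_mem _ (Set.mem_insert _ _)
  · exact Set.mem_insert_of_mem _ (Set.mem_insert_of_mem _ rfl)

lemma hcons3_1 : ∀ B, Inv form1 B →
    Consistent baseLangP RsymP (Fin 4) (B ∪ {form1 3}) := by
  rintro B ⟨hsub, hnb⟩
  apply consistent_of_subset
  · rintro x (hx | hx)
    · rcases hsub hx with h | h | h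
      · exact Or.inl h
      · exact Or.inr (Or.inl h)
      · exact Or.inr (Or.inr (Or.inl h))
    · rw [Set.mem_singleton_iff] at hx
      exact Or.inr (Or.inr (Or.inl hx))
  · rintro ⟨h1, h2⟩
    rcases h1 with h1 | h1
    · rcases h2 with h2 | h2
      · exact hnb ⟨h1, h2⟩
      · exact notp_ne_conj h2
    · exact p_ne_conj h1
lemma hcons3_2 : ∀ B, Inv form2 B →
    Consistent baseLangP RsymP (Fin 4) (B ∪ {form2 3}) := by
  rintro B ⟨hsub, hnb⟩
  apply consistent_of_subset
  · rintro x (hx | hx)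
    · rcases hsub hx with h | h | h
      · exact Or.inl h
      · exact Or.inr (Or.inl h)
      · exact Or.inr (Or.inr (Or.inr (Or.inl h)))
    · rw [Set.mem_singleton_iff] at hx
      exact Or.inr (Or.inr (Or.inr (Or.inl hx)))
  · rintro ⟨h1, h2⟩
    rcases h1 with h1 | h1
    · rcases h2 with h2 | h2
      · exact hnb ⟨h1, h2⟩
      · exact notp_ne_lt01 h2
    · exact p_ne_lt01 h1

lemma hcons0_1 : ∀ B, B ⊆ {form1 3} →
    Consistent baseLangP RsymP (Fin 4) (B ∪ {form1 0}) := by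
  intro B hB
  apply consistent_of_subset
  · rintro x (hx | hx)
    · exact Or.inr (Or.inr (Or.inl (hB hx)))
    · rw [Set.mem_singleton_iff] at hx
      exact Or.inl hx
  · rintro ⟨h1, h2⟩
    rcases h2 with h2 | h2
    · exact notp_ne_conj (hB h2)
    · exact p_ne_notp h2.symm

lemma hcons0_2 : ∀ B, B ⊆ {form2 3} →
    Consistent baseLangP RsymP (Fin 4) (B ∪ {form2 0}) := by
  intro B hB
  apply consistent_of_subset
  · rintro x (hx | hx)
    · exact Or.inr (Or.inr (Or.inr (Or.inl (hB hx))))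
    · rw [Set.mem_singleton_iff] at hx
      exact Or.inl hx
  · rintro ⟨h1, h2⟩
    rcases h2 with h2 | h2
    · exact notp_ne_lt01 (hB h2)
    · exact p_ne_notp h2.symm

lemma hcons2_2 : ∀ B, B ⊆ {form2 3} →
    Consistent baseLangP RsymP (Fin 4) (B ∪ {form2 2}) := by
  intro B hB
  apply consistent_of_subset
  · rintro x (hx | hx)
    · exact Or.inr (Or.inr (Or.inr (Or.inl (hB hx))))
    · rw [Set.mem_singleton_iff] at hx
      exact Or.inr (Or.inl hx)
  · rintro ⟨h1, h2⟩
    rcases h1 with h1 | h1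
    · exact p_ne_lt01 (hB h1)
    · exact p_ne_notp h1

/-! ### Base lemmas -/

lemma inv_base (form : Fin 4 → (baseLangP[[Fin 4]]).Sentence)
    (hform : ∀ d, form d ∈ ({p4, ∼p4, form 3} : Set _)) (e : LinearOrder (Fin 4)) :
    Inv form (base baseLangP RsymP (Fin 4) e form) := by
  refine base_glue e form (Inv form) ?_
  intro g hg _ l _ _ _
  refine foldl_inv form g hg hform l ∅ ⟨Set.empty_subset _, ?_⟩
  rintro ⟨h, -⟩
  exact h.elim

lemma three_mem_base (form : Fin 4 → (baseLangP[[Fin 4]]).Sentence)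
    (hform : ∀ d, form d ∈ ({p4, ∼p4, form 3} : Set _))
    (hcons : ∀ B, Inv form B → Consistent baseLangP RsymP (Fin 4) (B ∪ {form 3}))
    (e : LinearOrder (Fin 4)) :
    form 3 ∈ base baseLangP RsymP (Fin 4) e form := by
  refine base_glue e form (fun B => form 3 ∈ B) ?_
  intro g hg hg2 l _ _ hmem
  refine mem_foldl_three form g hg hg2 hform hcons l ∅ ⟨Set.empty_subset _, ?_⟩ (hmem 3)
  rintro ⟨h, -⟩
  exact h.elim

lemma zero_mem_base (form : Fin 4 → (baseLangP[[Fin 4]]).Sentence)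
    (hcons0 : ∀ B, B ⊆ {form 3} → Consistent baseLangP RsymP (Fin 4) (B ∪ {form 0}))
    (e : LinearOrder (Fin 4)) (h01 : e.lt 0 1) (h02 : e.lt 0 2) :
    form 0 ∈ base baseLangP RsymP (Fin 4) e form := by
  refine base_glue e form (fun B => form 0 ∈ B) ?_
  intro g hg hg2 l hsort hnd hmem
  obtain ⟨a, b, rfl⟩ := List.append_of_mem (hmem 0)
  have ha := prefix_elems e a b hsort hnd (e_not_le e h01) (e_not_le e h02)
  exact mem_foldl_split form g hg hg2 0 hcons0 a b ha

lemma head_mem_base (form : Fin 4 → (baseLangP[[Fin 4]]).Sentence)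
    (e : LinearOrder (Fin 4)) (d₀ : Fin 4) (rest : List (Fin 4))
    (hsort' : (d₀ :: rest).Pairwise (eLE e)) (hnd' : (d₀ :: rest).Nodup)
    (hmem' : ∀ x, x ∈ d₀ :: rest)
    (hcons0 : ∀ B, B ⊆ {form 3} → Consistent baseLangP RsymP (Fin 4) (B ∪ {form d₀})) :
    form d₀ ∈ base baseLangP RsymP (Fin 4) e form := by
  refine base_glue e form (fun B => form d₀ ∈ B) ?_
  intro g hg hg2 l hsort hnd hmem
  have hl : l = d₀ :: rest := eq_univ_list e l _ hsort hnd hmem hsort' hnd' hmem'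
  subst hl
  exact mem_foldl_split form g hg hg2 d₀ hcons0 [] rest
    (fun x hx => absurd hx List.not_mem_nil)

/-! ### The two linear orders -/

/-- The standard linear order on `Fin 4`. -/
def e₁ : LinearOrder (Fin 4) := inferInstance

lemma sorted₁ : List.Pairwise (eLE e₁) ([0, 1, 2, 3] : List (Fin 4)) := by
  refine List.Pairwise.imp (R := fun a b : Fin 4 => a ≤ b) (fun h => h) ?_
  decide

lemma e₁_lt01 : e₁.lt 0 1 := by
  exact (by decide : (0 : Fin 4) < 1)

/-- The reordering function inducing the order `2 ≺ 0 ≺ 1 ≺ 3`. -/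
def f2 : Fin 4 → Fin 4 := ![1, 2, 0, 3]

lemma f2_inj : Function.Injective f2 := by decide

/-- The linear order `2 ≺ 0 ≺ 1 ≺ 3` on `Fin 4`. -/
def e₂ : LinearOrder (Fin 4) := LinearOrder.lift' f2 f2_inj

instance : DecidableRel (fun a b : Fin 4 => f2 a ≤ f2 b) :=
  fun a b => inferInstanceAs (Decidable (f2 a ≤ f2 b))

lemma sorted₂ : List.Pairwise (eLE e₂) ([2, 0, 1, 3] : List (Fin 4)) := by
  refine List.Pairwise.imp (R := fun a b : Fin 4 => f2 a ≤ f2 b) (fun h => h) ?_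
  decide

lemma f2_le01 : f2 0 ≤ f2 1 := by decide
lemma f2_not_le10 : ¬ (f2 1 ≤ f2 0) := by decide

lemma e₂_lt01 : e₂.lt 0 1 :=
  (@lt_iff_le_not_ge _ e₂.toPartialOrder.toPreorder 0 1).2
    ⟨f2_le01, fun h => f2_not_le10 h⟩

/-! ### Part (i) -/

lemma conj_consequence (S : (baseLangP[[Fin 4]]).Theory)
    (E : Set (baseLangP[[Fin 4]]).Sentence)
    (hE : E ∈ Exts baseLangP RsymP (Fin 4) form1 S) :
    lt4 0 1 ∈ E ∧ lt4 0 2 ∈ E := by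
  obtain ⟨e, q, _, _, _, rfl⟩ := hE
  have h3 : form1 3 ∈ base baseLangP RsymP (Fin 4) e form1 :=
    three_mem_base form1 hform1 hcons3_1 e
  constructor
  · show (base baseLangP RsymP (Fin 4) e form1 ∪ spo baseLangP RsymP (Fin 4)) ⊨ᵇ lt4 0 1
    refine Theory.models_sentence_iff.2 fun M => ?_
    have hc : M ⊨ (lt4 0 1 ⊓ lt4 0 2) :=
      realize_of_modelType M (Set.mem_union_left _ h3)
    exact ((sentence_realize_inf _ _).1 hc).1
  · show (base baseLangP RsymP (Fin 4) e form1 ∪ spo baseLangP RsymP (Fin 4)) ⊨ᵇ lt4 0 2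
    refine Theory.models_sentence_iff.2 fun M => ?_
    have hc : M ⊨ (lt4 0 1 ⊓ lt4 0 2) :=
      realize_of_modelType M (Set.mem_union_left _ h3)
    exact ((sentence_realize_inf _ _).1 hc).2

lemma part1 : p4 ∈ lfpC baseLangP RsymP (Fin 4) form1 := by
  rw [lfpC, Set.sInf_eq_sInter]
  refine Set.mem_sInter.2 fun S hS => ?_
  have h1 : lt4 0 1 ∈ S := hS (Set.mem_sInter.2 fun E hE => (conj_consequence S E hE).1)
  have h2 : lt4 0 2 ∈ S := hS (Set.mem_sInter.2 fun E hE => (conj_consequence S E hE).2)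
  refine hS (Set.mem_sInter.2 fun E hE => ?_)
  obtain ⟨e, q, _, hcompat, hext, rfl⟩ := hE
  have hq01 : q 0 1 := by
    by_contra hn
    obtain ⟨M⟩ := hcompat
    have ha : M ⊨ lt4 0 1 := realize_of_modelType M
      (Set.mem_union_left _ (Set.mem_union_left _ (Set.mem_union_left _ h1)))
    have hb : M ⊨ ∼(lt4 0 1) := realize_of_modelType M
      (Set.mem_union_right _ ⟨0, 1, hn, rfl⟩)
    rw [Sentence.realize_not] at hb
    exact hb ha
  have hq02 : q 0 2 := by
    by_contra hn
    obtain ⟨M⟩ := hcompat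
    have ha : M ⊨ lt4 0 2 := realize_of_modelType M
      (Set.mem_union_left _ (Set.mem_union_left _ (Set.mem_union_left _ h2)))
    have hb : M ⊨ ∼(lt4 0 2) := realize_of_modelType M
      (Set.mem_union_right _ ⟨0, 2, hn, rfl⟩)
    rw [Sentence.realize_not] at hb
    exact hb ha
  have h0 : form1 0 ∈ base baseLangP RsymP (Fin 4) e form1 :=
    zero_mem_base form1 hcons0_1 e (hext 0 1 hq01) (hext 0 2 hq02)
  exact Theory.models_sentence_of_mem (Set.mem_union_left _ h0)

/-! ### Parts (ii) and (iii) -/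

/-- The belief set for part (ii): the closure of `{0 < 1}`. -/
def S₀ : (baseLangP[[Fin 4]]).Theory :=
  closure baseLangP RsymP (Fin 4) {lt4 0 1}

lemma mk_models_S₀ (Rr : Fin 4 → Fin 4 → Prop) (Pv : Prop) (h01 : Rr 0 1)
    (hirr : ∀ a, ¬ Rr a a) (htr : ∀ a b c, Rr a b → Rr b c → Rr a c) :
    letI := mkStruct Rr Pv; (Fin 4) ⊨ S₀ := by
  letI := mkStruct Rr Pv
  refine (Theory.model_iff _).2 fun φ hφ => ?_
  haveI : (Fin 4) ⊨ ({lt4 0 1} : (baseLangP[[Fin 4]]).Theory) ∪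
      spo baseLangP RsymP (Fin 4) := by
    refine (Theory.model_iff _).2 fun ψ hψ => ?_
    rcases hψ with hψ | hψ
    · rw [Set.mem_singleton_iff] at hψ; subst hψ
      exact (realize_ltSent_s15 Rr Pv 0 1).2 h01
    · haveI := models_spo Rr Pv hirr htr
      exact Theory.realize_sentence_of_mem (spo baseLangP RsymP (Fin 4)) hψ
  exact Theory.models_sentence_iff.1 hφ (Theory.ModelType.of _ (Fin 4))

lemma S₀_prefixed : C baseLangP RsymP (Fin 4) form2 S₀ ⊆ S₀ := by
  intro φ hφ
  have hstrict : IsStrictOrder (Fin 4) Rr1 :=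
    { irrefl := Rr1_irrefl, trans := Rr1_trans }
  have hcompat : Compatible baseLangP RsymP (Fin 4) Rr1 S₀ := by
    apply sat_of_model Rr1 False
    letI := mkStruct Rr1 False
    refine (Theory.model_iff _).2 fun ψ hψ => ?_
    rcases hψ with ((hψ | hψ) | hψ) | hψ
    · haveI := mk_models_S₀ Rr1 False ⟨rfl, rfl⟩ Rr1_irrefl Rr1_trans
      exact Theory.realize_sentence_of_mem S₀ hψ
    · haveI := models_spo Rr1 False Rr1_irrefl Rr1_trans
      exact Theory.realize_sentence_of_mem (spo baseLangP RsymP (Fin 4)) hψ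
    · obtain ⟨d, d', hdd, rfl⟩ := hψ
      exact (realize_ltSent_s15 _ _ _ _).2 hdd
    · obtain ⟨d, d', hdd, rfl⟩ := hψ
      refine (Sentence.realize_not (M := Fin 4)).2 fun hr => ?_
      exact hdd ((realize_ltSent_s15 _ _ _ _).1 hr)
  have hE1 : extension baseLangP RsymP (Fin 4) e₁ form2 ∈
      Exts baseLangP RsymP (Fin 4) form2 S₀ :=
    ⟨e₁, Rr1, hstrict, hcompat, by rintro d d' ⟨rfl, rfl⟩; exact e₁_lt01, rfl⟩
  have hE2 : extension baseLangP RsymP (Fin 4) e₂ form2 ∈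
      Exts baseLangP RsymP (Fin 4) form2 S₀ :=
    ⟨e₂, Rr1, hstrict, hcompat, by rintro d d' ⟨rfl, rfl⟩; exact e₂_lt01, rfl⟩
  have hφ1 := Set.mem_sInter.1 hφ _ hE1
  have hφ2 := Set.mem_sInter.1 hφ _ hE2
  have hp1 : form2 0 ∈ base baseLangP RsymP (Fin 4) e₁ form2 :=
    head_mem_base form2 e₁ 0 [1, 2, 3] sorted₁ (by decide) (by decide) hcons0_2
  have hinv1 := inv_base form2 hform2 e₁
  have hp2 : form2 2 ∈ base baseLangP RsymP (Fin 4) e₂ form2 :=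
    head_mem_base form2 e₂ 2 [0, 1, 3] sorted₂ (by decide) (by decide) hcons2_2
  have hinv2 := inv_base form2 hform2 e₂
  refine Theory.models_sentence_iff.2 fun M => ?_
  by_cases hMp : (M : Type) ⊨ p4
  · haveI : (M : Type) ⊨ (base baseLangP RsymP (Fin 4) e₁ form2 ∪
        spo baseLangP RsymP (Fin 4)) := by
      refine (Theory.model_iff _).2 fun ψ hψ => ?_
      rcases hψ with hψ | hψ
      · rcases hinv1.1 hψ with h | h | h
        · subst h; exact hMp
        · exact absurd ⟨hp1, h ▸ hψ⟩ hinv1.2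
        · subst h
          exact realize_of_modelType M (Set.mem_union_left _ rfl)
      · exact realize_of_modelType M (Set.mem_union_right _ hψ)
    exact Theory.models_sentence_iff.1 hφ1 (Theory.ModelType.of _ M)
  · haveI : (M : Type) ⊨ (base baseLangP RsymP (Fin 4) e₂ form2 ∪
        spo baseLangP RsymP (Fin 4)) := by
      refine (Theory.model_iff _).2 fun ψ hψ => ?_
      rcases hψ with hψ | hψ
      · rcases hinv2.1 hψ with h | h | h
        · exact absurd ⟨h ▸ hψ, hp2⟩ hinv2.2
        · subst h
          exact (Sentence.realize_not (M := (M : Type))).2 hMp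
        · subst h
          exact realize_of_modelType M (Set.mem_union_left _ rfl)
      · exact realize_of_modelType M (Set.mem_union_right _ hψ)
    exact Theory.models_sentence_iff.1 hφ2 (Theory.ModelType.of _ M)

lemma lfpC_sub : lfpC baseLangP RsymP (Fin 4) form2 ⊆ S₀ := by
  intro φ hφ
  rw [lfpC, Set.sInf_eq_sInter] at hφ
  exact Set.mem_sInter.1 hφ S₀ S₀_prefixed

lemma part3 : ¬ ((lfpC baseLangP RsymP (Fin 4) form2 ∪ {lt4 0 2} ∪
    spo baseLangP RsymP (Fin 4)) ⊨ᵇ p4) := by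
  intro h
  letI := mkStruct Rr0 False
  haveI : (Fin 4) ⊨ (lfpC baseLangP RsymP (Fin 4) form2 ∪ {lt4 0 2} ∪
      spo baseLangP RsymP (Fin 4)) := by
    refine (Theory.model_iff _).2 fun ψ hψ => ?_
    rcases hψ with (hψ | hψ) | hψ
    · haveI := mk_models_S₀ Rr0 False ⟨rfl, Or.inl rfl⟩ Rr0_irrefl Rr0_trans
      exact Theory.realize_sentence_of_mem S₀ (lfpC_sub hψ)
    · rw [Set.mem_singleton_iff] at hψ; subst hψ
      exact (realize_ltSent_s15 _ _ _ _).2 ⟨rfl, Or.inr rfl⟩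
    · haveI := models_spo Rr0 False Rr0_irrefl Rr0_trans
      exact Theory.realize_sentence_of_mem (spo baseLangP RsymP (Fin 4)) hψ
  have := Theory.models_sentence_iff.1 h (Theory.ModelType.of _ (Fin 4))
  exact (realize_pSent_s15 Rr0 False).1 this

lemma part2 : p4 ∉ lfpC baseLangP RsymP (Fin 4) form2 := fun h =>
  part3 (Theory.models_sentence_of_mem (Set.mem_union_left _ (Set.mem_union_left _ h)))

end Main





/-- Counterexample to (T*7): revising with `(0 < 1) ∧ (0 < 2)` makes `p` accepted, but
revising with `(0 < 1)` and then expanding with `(0 < 2)` does not yield `p`. -/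
theorem counterexample_T7 :
    pSent (Fin 4) ∈ lfpC baseLangP RsymP (Fin 4)
        ![pSent (Fin 4), ∼(pSent (Fin 4)), ∼(pSent (Fin 4)),
          ltSent baseLangP RsymP (Fin 4) 0 1 ⊓ ltSent baseLangP RsymP (Fin 4) 0 2] ∧
    pSent (Fin 4) ∉ lfpC baseLangP RsymP (Fin 4)
        ![pSent (Fin 4), ∼(pSent (Fin 4)), ∼(pSent (Fin 4)),
          ltSent baseLangP RsymP (Fin 4) 0 1] ∧
    ¬ ((lfpC baseLangP RsymP (Fin 4)
          ![pSent (Fin 4), ∼(pSent (Fin 4)), ∼(pSent (Fin 4)),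
            ltSent baseLangP RsymP (Fin 4) 0 1] ∪
        {ltSent baseLangP RsymP (Fin 4) 0 2} ∪ spo baseLangP RsymP (Fin 4)) ⊨ᵇ
        pSent (Fin 4)) :=
  ⟨part1, part2, part3⟩

end Brevis
end
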